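/- Let T be the triple intersection form of M_2^{(dP_8)^2}, and for real numbers r_5, r_6, r_7, r_8 set J = r_5 D_5 + r_6 D_6 + r_7 D_7 + r_8 D_8 and Γ_0 = 9D_5 + 3D_6 + 9D_7 + 9D_8. Then the four 'four-cycle volumes' are perfect squares: (1/2)T(D_6,J,J) = (1/2)(r_5 − 3r_6)², (1/2)T(D_7,J,J) = (1/2)(r_5 − r_7)², (1/2)T(D_8,J,J) = (1/2)(r_5 − r_8)², and (1/2)T(Γ_0,J,J) = (3/2)r_5². -/

import Mathlib

namespace Stmt16

/-- The real vector space with basis `D₅, D₆, D₇, D₈` (indexed `0, 1, 2, 3`). -/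
abbrev V := Fin 4 → ℝ

/-- The basis vector `D_{i+5}` (`i : Fin 4` zero-based: `D 0 = D₅, …, D 3 = D₈`). -/
def D (i : Fin 4) : V := Pi.single i 1

/-- The triple intersection numbers of `M₂^{(dP₈)²}` on basis triples. -/
def c (i j k : Fin 4) : ℝ :=
  if ({i, j, k} : Multiset (Fin 4)) = {0, 0, 0} then -2
  else if ({i, j, k} : Multiset (Fin 4)) = {1, 1, 1} then 9
  else if ({i, j, k} : Multiset (Fin 4)) = {2, 2, 2} then 1
  else if ({i, j, k} : Multiset (Fin 4)) = {3, 3, 3} then 1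
  else if ({i, j, k} : Multiset (Fin 4)) = {0, 0, 1} then 1
  else if ({i, j, k} : Multiset (Fin 4)) = {0, 0, 2} then 1
  else if ({i, j, k} : Multiset (Fin 4)) = {0, 0, 3} then 1
  else if ({i, j, k} : Multiset (Fin 4)) = {0, 1, 1} then -3
  else if ({i, j, k} : Multiset (Fin 4)) = {0, 2, 2} then -1
  else if ({i, j, k} : Multiset (Fin 4)) = {0, 3, 3} then -1
  else 0

/-- `Γ₀ = 9D₅ + 3D₆ + 9D₇ + 9D₈`. -/
def Γ0 : V := (9 : ℝ) • D 0 + (3 : ℝ) • D 1 + (9 : ℝ) • D 2 + (9 : ℝ) • D 3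

/-- For the triple intersection form `T` of `M₂^{(dP₈)²}` and
`J = r₅D₅ + r₆D₆ + r₇D₇ + r₈D₈`, the four 'four-cycle volumes' are perfect squares:
`(1/2)T(D₆,J,J) = (1/2)(r₅ − 3r₆)²`, `(1/2)T(D₇,J,J) = (1/2)(r₅ − r₇)²`,
`(1/2)T(D₈,J,J) = (1/2)(r₅ − r₈)²`, and `(1/2)T(Γ₀,J,J) = (3/2)r₅²`. -/
theorem statement16 (T : MultilinearMap ℝ (fun _ : Fin 3 => V) ℝ)
    (hsymm : ∀ x y z : V, T ![x, y, z] = T ![y, x, z] ∧ T ![x, y, z] = T ![x, z, y])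
    (hvals : ∀ i j k : Fin 4, T ![D i, D j, D k] = c i j k)
    (r5 r6 r7 r8 : ℝ) :
    let J : V := r5 • D 0 + r6 • D 1 + r7 • D 2 + r8 • D 3
    (1 / 2 : ℝ) * T ![D 1, J, J] = (1 / 2) * (r5 - 3 * r6) ^ 2 ∧
    (1 / 2 : ℝ) * T ![D 2, J, J] = (1 / 2) * (r5 - r7) ^ 2 ∧
    (1 / 2 : ℝ) * T ![D 3, J, J] = (1 / 2) * (r5 - r8) ^ 2 ∧
    (1 / 2 : ℝ) * T ![Γ0, J, J] = (3 / 2) * r5 ^ 2 := by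
  intro J
  have hJ : J = r5 • D 0 + r6 • D 1 + r7 • D 2 + r8 • D 3 := rfl
  have u0 : ∀ (w x y z : V), Function.update ![w, y, z] 0 x = ![x, y, z] := by
    intro w x y z; funext i; fin_cases i <;> simp
  have u1 : ∀ (x w y z : V), Function.update ![x, w, z] 1 y = ![x, y, z] := by
    intro x w y z; funext i; fin_cases i <;> simp
  have u2 : ∀ (x y w z : V), Function.update ![x, y, w] 2 z = ![x, y, z] := by
    intro x y w z; funext i; fin_cases i <;> simp
  have add0 : ∀ (a b y z : V), T ![a + b, y, z] = T ![a, y, z] + T ![b, y, z] := by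
    intro a b y z
    have := T.map_update_add ![a, y, z] 0 a b
    rwa [u0, u0, u0] at this
  have smul0 : ∀ (r : ℝ) (a y z : V), T ![r • a, y, z] = r * T ![a, y, z] := by
    intro r a y z
    have := T.map_update_smul ![a, y, z] 0 r a
    rwa [u0, u0] at this
  have add1 : ∀ (x a b z : V), T ![x, a + b, z] = T ![x, a, z] + T ![x, b, z] := by
    intro x a b z
    have := T.map_update_add ![x, a, z] 1 a b
    rwa [u1, u1, u1] at this
  have smul1 : ∀ (r : ℝ) (x a z : V), T ![x, r • a, z] = r * T ![x, a, z] := by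
    intro r x a z
    have := T.map_update_smul ![x, a, z] 1 r a
    rwa [u1, u1] at this
  have add2 : ∀ (x y a b : V), T ![x, y, a + b] = T ![x, y, a] + T ![x, y, b] := by
    intro x y a b
    have := T.map_update_add ![x, y, a] 2 a b
    rwa [u2, u2, u2] at this
  have smul2 : ∀ (r : ℝ) (x y a : V), T ![x, y, r • a] = r * T ![x, y, a] := by
    intro r x y a
    have := T.map_update_smul ![x, y, a] 2 r a
    rwa [u2, u2] at this
  have exp1 : ∀ (x z : V), T ![x, J, z] =
      r5 * T ![x, D 0, z] + r6 * T ![x, D 1, z] + r7 * T ![x, D 2, z] + r8 * T ![x, D 3, z] := by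
    intro x z
    rw [hJ, add1, add1, add1, smul1, smul1, smul1, smul1]
  have exp2 : ∀ (x : V), T ![x, J, J] =
      r5 * (r5 * T ![x, D 0, D 0] + r6 * T ![x, D 1, D 0] + r7 * T ![x, D 2, D 0] + r8 * T ![x, D 3, D 0]) +
      r6 * (r5 * T ![x, D 0, D 1] + r6 * T ![x, D 1, D 1] + r7 * T ![x, D 2, D 1] + r8 * T ![x, D 3, D 1]) +
      r7 * (r5 * T ![x, D 0, D 2] + r6 * T ![x, D 1, D 2] + r7 * T ![x, D 2, D 2] + r8 * T ![x, D 3, D 2]) +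
      r8 * (r5 * T ![x, D 0, D 3] + r6 * T ![x, D 1, D 3] + r7 * T ![x, D 2, D 3] + r8 * T ![x, D 3, D 3]) := by
    intro x
    conv_lhs => rw [show T ![x, J, J] = T ![x, J, r5 • D 0 + r6 • D 1 + r7 • D 2 + r8 • D 3] from by rw [← hJ]]
    rw [add2, add2, add2, smul2, smul2, smul2, smul2, exp1, exp1, exp1, exp1]
  have cv : ∀ i j k : Fin 4, T ![D i, D j, D k] = c i j k := hvals
  have h1 : T ![D 1, J, J] = (r5 - 3 * r6) ^ 2 := by
    rw [exp2]; simp only [cv]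
    simp (config := { decide := true }) only [c, if_true, if_false]
    ring
  have h2 : T ![D 2, J, J] = (r5 - r7) ^ 2 := by
    rw [exp2]; simp only [cv]
    simp (config := { decide := true }) only [c, if_true, if_false]
    ring
  have h3 : T ![D 3, J, J] = (r5 - r8) ^ 2 := by
    rw [exp2]; simp only [cv]
    simp (config := { decide := true }) only [c, if_true, if_false]
    ring
  have h0 : T ![D 0, J, J] =
      -2 * r5 ^ 2 + 2 * r5 * r6 + 2 * r5 * r7 + 2 * r5 * r8 - 3 * r6 ^ 2 - r7 ^ 2 - r8 ^ 2 := by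
    rw [exp2]; simp only [cv]
    simp (config := { decide := true }) only [c, if_true, if_false]
    ring
  have hG : T ![Γ0, J, J] = 9 * T ![D 0, J, J] + 3 * T ![D 1, J, J] + 9 * T ![D 2, J, J] + 9 * T ![D 3, J, J] := by
    rw [Γ0, add0, add0, add0, smul0, smul0, smul0, smul0]
  refine ⟨by rw [h1], by rw [h2], by rw [h3], ?_⟩
  rw [hG, h0, h1, h2, h3]; ring

end Stmt16
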